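/- Consider the approximate DPP iteration with parameter η > 0 started from Ψ_0 with ‖Ψ_0‖ ≤ V_max, with error functions ε_k and accumulated errors E_k = Σ_{j=0}^k ε_j, and suppose the sequence ‖E_k‖/(k+1) is bounded with ε̄ = limsup_{k→∞} ‖E_k‖/(k+1). Then limsup_{k→∞} ‖Q* − Q^{π_k}‖ ≤ (2γ/(1−γ)²) ε̄, where π_k is the policy induced at round k. -/

import Mathlib

open Finset Real Filter

variable {X A : Type*}

/-- `(πQ)(x) = Σ_a π(a|x) Q(x,a)`. -/
noncomputable def polApply [Fintype A] (pol : X → A → ℝ) (Q : X → A → ℝ) : X → ℝ :=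
  fun x => ∑ a, pol x a * Q x a

/-- Bellman operator `T^π`. -/
noncomputable def bellman [Fintype X] [Fintype A]
    (P : X → A → X → ℝ) (r : X → A → ℝ) (γ : ℝ) (pol : X → A → ℝ)
    (Q : X → A → ℝ) : X → A → ℝ :=
  fun x a => r x a + γ * ∑ x', ∑ a', P x a x' * pol x' a' * Q x' a'

/-- Bellman optimality operator `T`. -/
noncomputable def bellmanOpt [Fintype X] [Fintype A] [Nonempty A]
    (P : X → A → X → ℝ) (r : X → A → ℝ) (γ : ℝ) (Q : X → A → ℝ) : X → A → ℝ :=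
  fun x a => r x a + γ * ∑ x', P x a x' * (Finset.univ.sup' Finset.univ_nonempty (Q x'))

/-- Soft-max policy associated with action preferences `Ψ` at inverse temperature `η`. -/
noncomputable def softmaxPol [Fintype A] (η : ℝ) (Ψ : X → A → ℝ) : X → A → ℝ :=
  fun x a => Real.exp (η * Ψ x a) / ∑ a', Real.exp (η * Ψ x a')

/-- Supremum norm over state-action pairs. -/
noncomputable def supNorm [Fintype X] [Fintype A] [Nonempty X] [Nonempty A]
    (Q : X → A → ℝ) : ℝ :=
  Finset.univ.sup' Finset.univ_nonempty (fun p : X × A => |Q p.1 p.2|)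


section helpers
variable {ι : Type*} [Fintype ι] [Nonempty ι]

lemma wavg_le_sup' (w f : ι → ℝ) (hw : ∀ i, 0 ≤ w i) (hw1 : ∑ i, w i = 1) :
    ∑ i, w i * f i ≤ univ.sup' univ_nonempty f := by
  calc ∑ i, w i * f i ≤ ∑ i, w i * univ.sup' univ_nonempty f :=
        Finset.sum_le_sum fun i _ =>
          mul_le_mul_of_nonneg_left (Finset.le_sup' f (mem_univ i)) (hw i)
    _ = univ.sup' univ_nonempty f := by rw [← Finset.sum_mul, hw1, one_mul]

omit [Nonempty ι] in
lemma abs_wavg_le (w f : ι → ℝ) (hw : ∀ i, 0 ≤ w i) (hw1 : ∑ i, w i = 1)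
    (m : ℝ) (hm : ∀ i, |f i| ≤ m) : |∑ i, w i * f i| ≤ m := by
  calc |∑ i, w i * f i| ≤ ∑ i, |w i * f i| := Finset.abs_sum_le_sum_abs _ _
    _ ≤ ∑ i, w i * m := by
        refine Finset.sum_le_sum fun i _ => ?_
        rw [abs_mul, abs_of_nonneg (hw i)]
        exact mul_le_mul_of_nonneg_left (hm i) (hw i)
    _ = m := by rw [← Finset.sum_mul, hw1, one_mul]

lemma sup'_le_sup'_add (f g : ι → ℝ) (c : ℝ) (h : ∀ i, f i ≤ g i + c) :
    univ.sup' univ_nonempty f ≤ univ.sup' univ_nonempty g + c :=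
  Finset.sup'_le _ _ fun i _ =>
    le_trans (h i) (add_le_add_left (Finset.le_sup' g (mem_univ i)) c)

lemma sum_exp_pos' (f : ι → ℝ) : 0 < ∑ i, Real.exp (f i) :=
  Finset.sum_pos (fun _ _ => Real.exp_pos _) Finset.univ_nonempty

lemma softmax_sum_one' (f : ι → ℝ) :
    ∑ i, Real.exp (f i) / ∑ j, Real.exp (f j) = 1 := by
  rw [← Finset.sum_div, div_self (sum_exp_pos' f).ne']

/-- Boltzmann lower bound: the softmax average is within `card ι / η` of the max. -/
lemma sup'_sub_le_softmax_avg (η : ℝ) (hη : 0 < η) (f : ι → ℝ) :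
    univ.sup' univ_nonempty f - (Fintype.card ι : ℝ) / η ≤
      ∑ i, (Real.exp (η * f i) / ∑ j, Real.exp (η * f j)) * f i := by
  have hm : ∀ i, f i ≤ univ.sup' univ_nonempty f := fun i => Finset.le_sup' f (mem_univ i)
  set m : ℝ := univ.sup' univ_nonempty f with hmdef
  have hZpos : 0 < ∑ j, Real.exp (η * f j) := sum_exp_pos' _
  have hZge : Real.exp (η * m) ≤ ∑ j, Real.exp (η * f j) := by
    obtain ⟨i0, _, hi0⟩ := Finset.exists_mem_eq_sup' (univ_nonempty (α := ι)) f
    calc Real.exp (η * m) = Real.exp (η * f i0) := by rw [hmdef, hi0]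
      _ ≤ _ := Finset.single_le_sum (f := fun j => Real.exp (η * f j))
            (fun j _ => (Real.exp_pos _).le) (mem_univ i0)
  have hterm : ∀ i, (Real.exp (η * f i) / ∑ j, Real.exp (η * f j)) * (m - f i) ≤ 1 / η := by
    intro i
    have hp : Real.exp (η * f i) / ∑ j, Real.exp (η * f j) ≤ Real.exp (-(η * (m - f i))) := by
      rw [div_le_iff₀ hZpos]
      calc Real.exp (η * f i) = Real.exp (-(η * (m - f i))) * Real.exp (η * m) := by
            rw [← Real.exp_add]; ring_nf
        _ ≤ _ := mul_le_mul_of_nonneg_left hZge (Real.exp_pos _).le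
    have hte : η * (m - f i) * Real.exp (-(η * (m - f i))) ≤ 1 := by
      have ht0 : 0 ≤ η * (m - f i) := mul_nonneg hη.le (sub_nonneg.mpr (hm i))
      have h1 : η * (m - f i) ≤ Real.exp (η * (m - f i)) :=
        le_trans (by linarith) (Real.add_one_le_exp _)
      calc η * (m - f i) * Real.exp (-(η * (m - f i)))
          ≤ Real.exp (η * (m - f i)) * Real.exp (-(η * (m - f i))) :=
            mul_le_mul_of_nonneg_right h1 (Real.exp_pos _).le
        _ = 1 := by rw [← Real.exp_add, add_neg_cancel, Real.exp_zero]
    calc (Real.exp (η * f i) / ∑ j, Real.exp (η * f j)) * (m - f i)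
        ≤ Real.exp (-(η * (m - f i))) * (m - f i) :=
          mul_le_mul_of_nonneg_right hp (sub_nonneg.mpr (hm i))
      _ = (η * (m - f i) * Real.exp (-(η * (m - f i)))) / η := by
          field_simp
      _ ≤ 1 / η := by gcongr
  have key : ∑ i, (Real.exp (η * f i) / ∑ j, Real.exp (η * f j)) * (m - f i) ≤
      (Fintype.card ι : ℝ) / η := by
    calc ∑ i, (Real.exp (η * f i) / ∑ j, Real.exp (η * f j)) * (m - f i)
        ≤ ∑ _i : ι, 1 / η := Finset.sum_le_sum fun i _ => hterm i
      _ = (Fintype.card ι : ℝ) / η := by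
          rw [Finset.sum_const, card_univ, nsmul_eq_mul]; ring
  have hsplit : ∑ i, (Real.exp (η * f i) / ∑ j, Real.exp (η * f j)) * f i =
      m - ∑ i, (Real.exp (η * f i) / ∑ j, Real.exp (η * f j)) * (m - f i) := by
    rw [eq_sub_iff_add_eq, ← Finset.sum_add_distrib]
    calc ∑ i, ((Real.exp (η * f i) / ∑ j, Real.exp (η * f j)) * f i +
          (Real.exp (η * f i) / ∑ j, Real.exp (η * f j)) * (m - f i))
        = ∑ i, (Real.exp (η * f i) / ∑ j, Real.exp (η * f j)) * m :=
          Finset.sum_congr rfl fun i _ => by ring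
      _ = m := by rw [← Finset.sum_mul, softmax_sum_one' (fun i => η * f i), one_mul]
  linarith [key, hsplit.ge]

end helpers

section pv
variable {X A : Type*} [Fintype X]

/-- expected next-state value. -/
noncomputable def PVal (P : X → A → X → ℝ) (V : X → ℝ) (x : X) (a : A) : ℝ :=
  ∑ x', P x a x' * V x'

lemma PVal_congr (P : X → A → X → ℝ) {V W : X → ℝ} (h : ∀ y, V y = W y) (x : X) (a : A) :
    PVal P V x a = PVal P W x a :=
  Finset.sum_congr rfl fun y _ => by rw [h y]

lemma PVal_add (P : X → A → X → ℝ) (V W : X → ℝ) (x : X) (a : A) :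
    PVal P (fun y => V y + W y) x a = PVal P V x a + PVal P W x a := by
  unfold PVal
  rw [← Finset.sum_add_distrib]
  exact Finset.sum_congr rfl fun y _ => by ring

lemma PVal_sub_smul (P : X → A → X → ℝ) (V W : X → ℝ) (c : ℝ) (x : X) (a : A) :
    PVal P (fun y => V y - c * W y) x a = PVal P V x a - c * PVal P W x a := by
  unfold PVal
  rw [Finset.mul_sum, ← Finset.sum_sub_distrib]
  exact Finset.sum_congr rfl fun y _ => by ring

lemma PVal_sub (P : X → A → X → ℝ) (V W : X → ℝ) (x : X) (a : A) :
    PVal P (fun y => V y - W y) x a = PVal P V x a - PVal P W x a := by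
  unfold PVal
  rw [← Finset.sum_sub_distrib]
  exact Finset.sum_congr rfl fun y _ => by ring

lemma PVal_abs_le [Nonempty X] (P : X → A → X → ℝ)
    (hP0 : ∀ x a x', 0 ≤ P x a x') (hP1 : ∀ x a, ∑ x', P x a x' = 1)
    (V : X → ℝ) (m : ℝ) (hm : ∀ x', |V x'| ≤ m) (x : X) (a : A) :
    |PVal P V x a| ≤ m :=
  abs_wavg_le (P x a) V (hP0 x a) (hP1 x a) m hm

end pv

section sn
variable {X A : Type*} [Fintype X] [Fintype A] [Nonempty X] [Nonempty A]

lemma abs_le_supNorm (f : X → A → ℝ) (x : X) (a : A) : |f x a| ≤ supNorm f :=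
  Finset.le_sup' (fun p : X × A => |f p.1 p.2|) (mem_univ (x, a))

lemma supNorm_le {f : X → A → ℝ} {m : ℝ} (h : ∀ x a, |f x a| ≤ m) : supNorm f ≤ m :=
  Finset.sup'_le _ _ fun p _ => h p.1 p.2

lemma supNorm_nonneg (f : X → A → ℝ) : 0 ≤ supNorm f :=
  le_trans (abs_nonneg _) (abs_le_supNorm f (Classical.arbitrary X) (Classical.arbitrary A))

lemma bellman_eq (P : X → A → X → ℝ) (r : X → A → ℝ) (γ : ℝ)
    (po Q : X → A → ℝ) (x : X) (a : A) :
    bellman P r γ po Q x a = r x a + γ * PVal P (fun x' => ∑ a', po x' a' * Q x' a') x a := by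
  unfold bellman PVal
  congr 1
  congr 1
  exact Finset.sum_congr rfl fun x' _ => by
    rw [Finset.mul_sum]; exact Finset.sum_congr rfl fun a' _ => by ring

end sn
set_option maxHeartbeats 1000000 in
/-- Corollary 2 of the paper: asymptotic `ℓ∞`-norm performance-loss bound of
approximate DPP in terms of the average accumulated error. -/
theorem approx_dpp_asymptotic_bound
    {X A : Type*} [Fintype X] [Fintype A] [Nonempty X] [Nonempty A]
    (P : X → A → X → ℝ) (hP0 : ∀ x a x', 0 ≤ P x a x') (hP1 : ∀ x a, ∑ x', P x a x' = 1)
    (r : X → A → ℝ) (Rmax : ℝ) (hR : 0 < Rmax) (hr : ∀ x a, |r x a| ≤ Rmax)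
    (γ : ℝ) (hγ0 : 0 ≤ γ) (hγ1 : γ < 1)
    (Vmax : ℝ) (hV : Vmax = Rmax / (1 - γ))
    (η : ℝ) (hη : 0 < η)
    (ε : ℕ → X → A → ℝ)
    (E : ℕ → X → A → ℝ)
    (hE : ∀ k x a, E k x a = ∑ j ∈ Finset.range (k + 1), ε j x a)
    (hbdd : BddAbove (Set.range fun k : ℕ => supNorm (E k) / ((k : ℝ) + 1)))
    (εbar : ℝ)
    (hεbar : εbar = Filter.limsup (fun k : ℕ => supNorm (E k) / ((k : ℝ) + 1)) Filter.atTop)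
    (Ψ : ℕ → X → A → ℝ) (hΨ0 : supNorm (Ψ 0) ≤ Vmax)
    (pol : ℕ → X → A → ℝ) (hpol : ∀ k, pol k = softmaxPol η (Ψ k))
    (hΨ : ∀ k x a, Ψ (k + 1) x a =
      Ψ k x a + bellman P r γ (pol k) (Ψ k) x a - polApply (pol k) (Ψ k) x + ε k x a)
    (Qstar : X → A → ℝ) (hQstar : bellmanOpt P r γ Qstar = Qstar)
    (Qpi : ℕ → X → A → ℝ) (hQpi : ∀ k, bellman P r γ (pol k) (Qpi k) = Qpi k) :
    Filter.limsup (fun k : ℕ => supNorm (fun x a => Qstar x a - Qpi k x a)) Filter.atTop ≤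
      2 * γ / (1 - γ) ^ 2 * εbar := by
  have hg : (0:ℝ) < 1 - γ := by linarith
  -- basic abbreviations
  obtain ⟨c0, hc0⟩ : ∃ c0 : ℝ, c0 = (Fintype.card A : ℝ) / η := ⟨_, rfl⟩
  have hc00 : 0 ≤ c0 := by
    rw [hc0]; positivity
  obtain ⟨u, hu⟩ : ∃ u : ℕ → X → ℝ, ∀ k x, u k x = ∑ a, pol k x a * Ψ k x a :=
    ⟨_, fun _ _ => rfl⟩
  obtain ⟨S, hS⟩ : ∃ S : ℕ → X → ℝ, ∀ k x, S k x = ∑ j ∈ Finset.range (k+1), u j x :=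
    ⟨_, fun _ _ => rfl⟩
  obtain ⟨Vstar, hVs⟩ : ∃ V : X → ℝ, ∀ x, V x = univ.sup' univ_nonempty (Qstar x) :=
    ⟨_, fun _ => rfl⟩
  obtain ⟨b, hb⟩ : ∃ b : ℕ → ℝ,
      ∀ k, b k = supNorm (fun x (_ : A) => S k x - ((k:ℝ)+1) * Vstar x) := ⟨_, fun _ => rfl⟩
  have hb0 : ∀ k, 0 ≤ b k := fun k => (hb k) ▸ supNorm_nonneg _
  -- policy is a probability
  have hpol0 : ∀ k x a, 0 ≤ pol k x a := by
    intro k x a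
    rw [hpol k]
    exact div_nonneg (Real.exp_pos _).le (sum_exp_pos' (fun a' => η * Ψ k x a')).le
  have hpol1 : ∀ k x, ∑ a, pol k x a = 1 := by
    intro k x
    rw [hpol k]
    exact softmax_sum_one' (fun a' => η * Ψ k x a')
  -- Boltzmann bounds on u
  have hu_le : ∀ k x, u k x ≤ univ.sup' univ_nonempty (Ψ k x) := by
    intro k x
    rw [hu]
    exact wavg_le_sup' _ _ (hpol0 k x) (hpol1 k x)
  have hu_ge : ∀ k x, univ.sup' univ_nonempty (Ψ k x) - c0 ≤ u k x := by
    intro k x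
    rw [hu, hc0, hpol k]
    exact sup'_sub_le_softmax_avg η hη (Ψ k x)
  -- Q* fixed point in PVal form
  have hQs : ∀ x a, Qstar x a = r x a + γ * PVal P Vstar x a := by
    intro x a
    conv_lhs => rw [← hQstar]
    unfold bellmanOpt PVal
    congr 2
    exact Finset.sum_congr rfl fun x' _ => by rw [hVs]
  have hQle : ∀ x a, Qstar x a ≤ Vstar x := by
    intro x a
    rw [hVs]
    exact Finset.le_sup' (Qstar x) (mem_univ a)
  -- one-step recursion
  have hstep : ∀ k x a,
      Ψ (k+1) x a = Ψ k x a + (r x a + γ * PVal P (u k) x a) - u k x + ε k x a := by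
    intro k x a
    rw [hΨ k x a, bellman_eq]
    have h1 : PVal P (fun x' => ∑ a', pol k x' a' * Ψ k x' a') x a = PVal P (u k) x a :=
      PVal_congr P (fun y => (hu k y).symm) x a
    have h2 : polApply (pol k) (Ψ k) x = u k x := (hu k x).symm
    rw [h1, h2]
  -- unrolled recursion
  have hunroll : ∀ k x a, Ψ (k+1) x a =
      Ψ 0 x a + ((k:ℝ)+1) * r x a + γ * PVal P (S k) x a - S k x + E k x a := by
    intro k
    induction k with
    | zero =>
      intro x a
      have hS0 : ∀ y, S 0 y = u 0 y := fun y => by rw [hS]; simp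
      have hE0 : E 0 x a = ε 0 x a := by rw [hE]; simp
      have hP0' : PVal P (S 0) x a = PVal P (u 0) x a := PVal_congr P hS0 x a
      rw [hstep 0 x a, hP0', hE0, hS0 x]
      push_cast
      ring
    | succ k ih =>
      intro x a
      have hSsucc : ∀ y, S (k+1) y = S k y + u (k+1) y := fun y => by
        rw [hS, hS, Finset.sum_range_succ]
      have hEsucc : E (k+1) x a = E k x a + ε (k+1) x a := by
        rw [hE, hE, Finset.sum_range_succ]
      have hPsucc : PVal P (S (k+1)) x a = PVal P (S k) x a + PVal P (u (k+1)) x a := by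
        rw [PVal_congr P hSsucc x a, PVal_add]
      rw [hstep (k+1) x a, ih x a, hSsucc x, hEsucc, hPsucc]
      push_cast
      ring
  -- recurrence for b
  obtain ⟨D, hD⟩ : ∃ D : ℝ,
      D = supNorm (fun x (_ : A) => Vstar x) + supNorm (Ψ 0) + c0 := ⟨_, rfl⟩
  have hD0 : 0 ≤ D := by
    rw [hD]
    have := supNorm_nonneg (fun x (_ : A) => Vstar x)
    have := supNorm_nonneg (Ψ 0)
    linarith
  have hrec : ∀ k, b (k+1) ≤ γ * b k + D + supNorm (E k) := by
    intro k
    rw [hb]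
    apply supNorm_le
    intro x a
    obtain ⟨Tx, hTxdef⟩ : ∃ T : ℝ,
        T = univ.sup' univ_nonempty
          (fun a' => ((k:ℝ)+1) * r x a' + γ * PVal P (S k) x a') := ⟨_, rfl⟩
    have hρ : ∀ a', |Ψ 0 x a' + E k x a'| ≤ supNorm (Ψ 0) + supNorm (E k) := by
      intro a'
      calc |Ψ 0 x a' + E k x a'| ≤ |Ψ 0 x a'| + |E k x a'| := abs_add_le _ _
        _ ≤ _ := add_le_add (abs_le_supNorm _ x a') (abs_le_supNorm _ x a')
    have hM1 : univ.sup' univ_nonempty (Ψ (k+1) x) ≤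
        Tx - S k x + (supNorm (Ψ 0) + supNorm (E k)) := by
      have h := sup'_le_sup'_add (Ψ (k+1) x)
        (fun a' => ((k:ℝ)+1) * r x a' + γ * PVal P (S k) x a')
        (-(S k x) + (supNorm (Ψ 0) + supNorm (E k))) ?_
      · rw [← hTxdef] at h; linarith
      · intro a'
        try simp only []
        rw [hunroll k x a']
        have := (abs_le.mp (hρ a')).2
        linarith
    have hM2 : Tx - S k x - (supNorm (Ψ 0) + supNorm (E k)) ≤
        univ.sup' univ_nonempty (Ψ (k+1) x) := by
      have h := sup'_le_sup'_add
        (fun a' => ((k:ℝ)+1) * r x a' + γ * PVal P (S k) x a') (Ψ (k+1) x)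
        (S k x + (supNorm (Ψ 0) + supNorm (E k))) ?_
      · rw [← hTxdef] at h; linarith
      · intro a'
        try simp only []
        rw [hunroll k x a']
        have := (abs_le.mp (hρ a')).1
        linarith
    have hub : |u (k+1) x - (Tx - S k x)| ≤ supNorm (Ψ 0) + supNorm (E k) + c0 := by
      have h1 := hu_le (k+1) x
      have h2 := hu_ge (k+1) x
      rw [abs_le]
      constructor
      · linarith
      · linarith
    have hdist : ∀ y, |S k y - ((k:ℝ)+1) * Vstar y| ≤ b k := by
      intro y
      rw [hb]
      exact abs_le_supNorm (fun x (_ : A) => S k x - ((k:ℝ)+1) * Vstar x) y a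
    have hPab : ∀ a', |PVal P (S k) x a' - ((k:ℝ)+1) * PVal P Vstar x a'| ≤ b k := by
      intro a'
      rw [← PVal_sub_smul]
      exact PVal_abs_le P hP0 hP1 _ (b k) hdist x a'
    have hk0 : (0:ℝ) ≤ (k:ℝ)+1 := by positivity
    have hT1 : Tx ≤ ((k:ℝ)+1) * Vstar x + γ * b k := by
      rw [hTxdef]
      apply Finset.sup'_le
      intro a' _
      have h1 := (abs_le.mp (hPab a')).2
      have h3 : Qstar x a' ≤ Vstar x := hQle x a'
      have h5 : γ * PVal P (S k) x a' ≤ γ * (((k:ℝ)+1) * PVal P Vstar x a') + γ * b k := by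
        nlinarith [mul_le_mul_of_nonneg_left h1 hγ0]
      have h6 : ((k:ℝ)+1) * Qstar x a' ≤ ((k:ℝ)+1) * Vstar x :=
        mul_le_mul_of_nonneg_left h3 hk0
      have h7 : ((k:ℝ)+1) * Qstar x a' =
          ((k:ℝ)+1) * r x a' + γ * (((k:ℝ)+1) * PVal P Vstar x a') := by
        rw [hQs x a']; ring
      linarith
    have hT2 : ((k:ℝ)+1) * Vstar x - γ * b k ≤ Tx := by
      obtain ⟨a0, _, ha0⟩ := Finset.exists_mem_eq_sup' (univ_nonempty (α := A)) (Qstar x)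
      have hv0 : Vstar x = Qstar x a0 := by rw [hVs, ha0]
      have h1 := (abs_le.mp (hPab a0)).1
      have h5 : γ * (((k:ℝ)+1) * PVal P Vstar x a0) ≤ γ * PVal P (S k) x a0 + γ * b k := by
        nlinarith [mul_le_mul_of_nonneg_left (show ((k:ℝ)+1) * PVal P Vstar x a0 ≤
          PVal P (S k) x a0 + b k by linarith) hγ0]
      have h7 : ((k:ℝ)+1) * Vstar x =
          ((k:ℝ)+1) * r x a0 + γ * (((k:ℝ)+1) * PVal P Vstar x a0) := by
        rw [hv0, hQs x a0]; ring
      have h8 : ((k:ℝ)+1) * r x a0 + γ * PVal P (S k) x a0 ≤ Tx := by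
        rw [hTxdef]
        exact Finset.le_sup' (fun a' => ((k:ℝ)+1) * r x a' + γ * PVal P (S k) x a')
          (mem_univ a0)
      linarith
    have hSsucc : S (k+1) x = S k x + u (k+1) x := by
      rw [hS, hS, Finset.sum_range_succ]
    have hV' := abs_le.mp (abs_le_supNorm (fun x (_ : A) => Vstar x) x a)
    have hA := abs_le.mp hub
    rw [hD]
    push_cast
    rw [abs_le]
    constructor
    · linarith
    · linarith
  have hperf : ∀ m : ℕ,
      (1-γ) * (((m:ℝ)+1) * supNorm (fun x a => Qstar x a - Qpi (m+1) x a)) ≤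
        γ * (2*γ*b m + (2*(supNorm (Ψ 0) + supNorm (E m)) + c0)) := by
    intro m
    have hs : (0:ℝ) < (m:ℝ)+1 := by positivity
    obtain ⟨β, hβ⟩ : ∃ β : ℝ, β = supNorm (Ψ 0) + supNorm (E m) := ⟨_, rfl⟩
    obtain ⟨G, hG⟩ : ∃ G : X → A → ℝ,
        ∀ x a, G x a = ((m:ℝ)+1) * r x a + γ * PVal P (S m) x a := ⟨_, fun _ _ => rfl⟩
    have hΨG : ∀ x a, Ψ (m+1) x a = G x a - S m x + (Ψ 0 x a + E m x a) := by
      intro x a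
      rw [hunroll m x a, hG]
      push_cast
      ring
    have hρ : ∀ x a, |Ψ 0 x a + E m x a| ≤ β := by
      intro x a
      rw [hβ]
      calc |Ψ 0 x a + E m x a| ≤ |Ψ 0 x a| + |E m x a| := abs_add_le _ _
        _ ≤ _ := add_le_add (abs_le_supNorm _ x a) (abs_le_supNorm _ x a)
    have hgreedy : ∀ x, univ.sup' univ_nonempty (G x) ≤
        (∑ a, pol (m+1) x a * G x a) + (2*β + c0) := by
      intro x
      have h1 : univ.sup' univ_nonempty (G x) ≤
          univ.sup' univ_nonempty (Ψ (m+1) x) + (S m x + β) := by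
        apply sup'_le_sup'_add
        intro a
        rw [hΨG x a]
        have := (abs_le.mp (hρ x a)).1
        linarith
      have h2 := hu_ge (m+1) x
      have h3 : u (m+1) x = (∑ a, pol (m+1) x a * G x a) - S m x +
          ∑ a, pol (m+1) x a * (Ψ 0 x a + E m x a) := by
        rw [hu]
        calc ∑ a, pol (m+1) x a * Ψ (m+1) x a
            = ∑ a, (pol (m+1) x a * G x a - pol (m+1) x a * S m x +
                pol (m+1) x a * (Ψ 0 x a + E m x a)) :=
              Finset.sum_congr rfl fun a _ => by rw [hΨG x a]; ring
          _ = (∑ a, pol (m+1) x a * G x a) - (∑ a, pol (m+1) x a * S m x) +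
              ∑ a, pol (m+1) x a * (Ψ 0 x a + E m x a) := by
              rw [Finset.sum_add_distrib, Finset.sum_sub_distrib]
          _ = _ := by rw [← Finset.sum_mul, hpol1, one_mul]
      have h4 := (abs_le.mp (abs_wavg_le (pol (m+1) x) (fun a => Ψ 0 x a + E m x a)
        (hpol0 _ x) (hpol1 _ x) β (hρ x))).2
      linarith
    have hdist : ∀ y, |S m y - ((m:ℝ)+1) * Vstar y| ≤ b m := by
      intro y
      rw [hb]
      exact abs_le_supNorm (fun x (_ : A) => S m x - ((m:ℝ)+1) * Vstar x) y
        (Classical.arbitrary A)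
    have hGQ : ∀ x a, |G x a - ((m:ℝ)+1) * Qstar x a| ≤ γ * b m := by
      intro x a
      have h1 : G x a - ((m:ℝ)+1) * Qstar x a =
          γ * (PVal P (S m) x a - ((m:ℝ)+1) * PVal P Vstar x a) := by
        rw [hG, hQs]; ring
      rw [h1, abs_mul, abs_of_nonneg hγ0]
      apply mul_le_mul_of_nonneg_left _ hγ0
      rw [← PVal_sub_smul]
      exact PVal_abs_le P hP0 hP1 _ (b m) hdist x a
    have hVpi : ∀ x, ((m:ℝ)+1) * Vstar x -
        ((m:ℝ)+1) * (∑ a, pol (m+1) x a * Qstar x a) ≤ 2*γ*b m + (2*β + c0) := by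
      intro x
      obtain ⟨a0, _, ha0⟩ := Finset.exists_mem_eq_sup' (univ_nonempty (α := A)) (Qstar x)
      have hv0 : Vstar x = Qstar x a0 := by rw [hVs, ha0]
      have h1 : ((m:ℝ)+1) * Vstar x ≤ G x a0 + γ * b m := by
        have := (abs_le.mp (hGQ x a0)).1
        rw [hv0]
        linarith
      have h2 : G x a0 ≤ univ.sup' univ_nonempty (G x) := Finset.le_sup' (G x) (mem_univ a0)
      have h3 := hgreedy x
      have h4 : (∑ a, pol (m+1) x a * G x a) ≤
          (∑ a, pol (m+1) x a * (((m:ℝ)+1) * Qstar x a + γ * b m)) := by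
        refine Finset.sum_le_sum fun a _ => mul_le_mul_of_nonneg_left ?_ (hpol0 _ x a)
        have := (abs_le.mp (hGQ x a)).2
        linarith
      have h5 : (∑ a, pol (m+1) x a * (((m:ℝ)+1) * Qstar x a + γ * b m)) =
          ((m:ℝ)+1) * (∑ a, pol (m+1) x a * Qstar x a) + γ * b m := by
        calc ∑ a, pol (m+1) x a * (((m:ℝ)+1) * Qstar x a + γ * b m)
            = ∑ a, (((m:ℝ)+1) * (pol (m+1) x a * Qstar x a) + pol (m+1) x a * (γ * b m)) :=
              Finset.sum_congr rfl fun a _ => by ring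
          _ = ((m:ℝ)+1) * (∑ a, pol (m+1) x a * Qstar x a) +
              (∑ a, pol (m+1) x a) * (γ * b m) := by
              rw [Finset.sum_add_distrib, Finset.mul_sum, Finset.sum_mul]
          _ = _ := by rw [hpol1, one_mul]
      linarith
    have hπQV : ∀ x, ∑ a, pol (m+1) x a * Qstar x a ≤ Vstar x := by
      intro x
      rw [hVs]
      exact wavg_le_sup' _ _ (hpol0 _ x) (hpol1 _ x)
    have hQpi' : ∀ x a, Qpi (m+1) x a = r x a +
        γ * PVal P (fun x' => ∑ a', pol (m+1) x' a' * Qpi (m+1) x' a') x a := by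
      intro x a
      conv_lhs => rw [← hQpi (m+1)]
      exact bellman_eq P r γ (pol (m+1)) (Qpi (m+1)) x a
    obtain ⟨Δ, hΔ⟩ : ∃ d : ℝ, d = supNorm (fun x a => Qstar x a - Qpi (m+1) x a) := ⟨_, rfl⟩
    have hw : ∀ x, |Vstar x - ∑ a, pol (m+1) x a * Qpi (m+1) x a| ≤
        Δ + (2*γ*b m + (2*β + c0))/((m:ℝ)+1) := by
      intro x
      have h1 := abs_le.mp (abs_wavg_le (pol (m+1) x)
        (fun a => Qstar x a - Qpi (m+1) x a) (hpol0 _ x) (hpol1 _ x) Δ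
        (fun a => by rw [hΔ]; exact abs_le_supNorm (fun x a => Qstar x a - Qpi (m+1) x a) x a))
      have h2 : ∑ a, pol (m+1) x a * (Qstar x a - Qpi (m+1) x a) =
          (∑ a, pol (m+1) x a * Qstar x a) - ∑ a, pol (m+1) x a * Qpi (m+1) x a := by
        calc ∑ a, pol (m+1) x a * (Qstar x a - Qpi (m+1) x a)
            = ∑ a, (pol (m+1) x a * Qstar x a - pol (m+1) x a * Qpi (m+1) x a) :=
              Finset.sum_congr rfl fun a _ => by ring
          _ = _ := Finset.sum_sub_distrib _ _
      have h3 : 0 ≤ Vstar x - ∑ a, pol (m+1) x a * Qstar x a := by linarith [hπQV x]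
      have h4 : Vstar x - ∑ a, pol (m+1) x a * Qstar x a ≤
          (2*γ*b m + (2*β + c0))/((m:ℝ)+1) := by
        rw [le_div_iff₀ hs]
        have h6 : (Vstar x - ∑ a, pol (m+1) x a * Qstar x a) * ((m:ℝ)+1) =
            ((m:ℝ)+1) * Vstar x - ((m:ℝ)+1) * (∑ a, pol (m+1) x a * Qstar x a) := by ring
        rw [h6]
        exact hVpi x
      rw [abs_le]
      constructor
      · linarith [h1.1]
      · linarith [h1.2]
    have hpt : ∀ x a, |Qstar x a - Qpi (m+1) x a| ≤
        γ * (Δ + (2*γ*b m + (2*β + c0))/((m:ℝ)+1)) := by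
      intro x a
      have h1 : Qstar x a - Qpi (m+1) x a = γ *
          PVal P (fun x' => Vstar x' - ∑ a', pol (m+1) x' a' * Qpi (m+1) x' a') x a := by
        rw [hQs x a, hQpi' x a, PVal_sub]
        ring
      rw [h1, abs_mul, abs_of_nonneg hγ0]
      exact mul_le_mul_of_nonneg_left (PVal_abs_le P hP0 hP1 _ _ hw x a) hγ0
    have hΔle : Δ ≤ γ * (Δ + (2*γ*b m + (2*β + c0))/((m:ℝ)+1)) := by
      conv_lhs => rw [hΔ]
      exact supNorm_le fun x a => hpt x a
    rw [← hΔ, ← hβ]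
    have hmul := mul_le_mul_of_nonneg_left hΔle hs.le
    have hexp : ((m:ℝ)+1) * (γ * (Δ + (2*γ*b m + (2*β + c0))/((m:ℝ)+1))) =
        γ * (((m:ℝ)+1)*Δ) + γ * (2*γ*b m + (2*β + c0)) := by
      field_simp
    linarith
  -- limsup wrap-up
  have hEbnd : IsBoundedUnder (· ≤ ·) atTop (fun k : ℕ => supNorm (E k) / ((k:ℝ)+1)) := by
    obtain ⟨mb, hmb⟩ := hbdd
    exact isBoundedUnder_of ⟨mb, fun k => hmb ⟨k, rfl⟩⟩
  have hεbar0 : 0 ≤ εbar := by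
    rw [hεbar]
    refine le_limsup_of_frequently_le (Filter.Frequently.of_forall fun k => ?_) hEbnd
    exact div_nonneg (supNorm_nonneg _) (by positivity)
  obtain ⟨K, hK⟩ : ∃ K : ℝ, K = 2*γ/(1-γ)^2 := ⟨_, rfl⟩
  have hK0 : 0 ≤ K := by
    rw [hK]
    positivity
  have hgoalK : 2 * γ / (1 - γ) ^ 2 * εbar = K * εbar := by rw [hK]
  rw [hgoalK]
  have hcob : IsCoboundedUnder (· ≤ ·) atTop
      (fun k : ℕ => supNorm (fun x a => Qstar x a - Qpi k x a)) := by
    have h1 : IsBoundedUnder (· ≥ ·) atTop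
        (fun k : ℕ => supNorm (fun x a => Qstar x a - Qpi k x a)) :=
      isBoundedUnder_of ⟨0, fun k => supNorm_nonneg _⟩
    exact h1.isCoboundedUnder_le
  apply le_of_forall_gt_imp_ge_of_dense
  intro c hc
  apply Filter.limsup_le_of_le hcob
  obtain ⟨δ, hδdef⟩ : ∃ δ : ℝ, δ = min 1 ((c - K*εbar)/(2*(K+1))) := ⟨_, rfl⟩
  have hδ0 : 0 < δ := by
    rw [hδdef]
    exact lt_min one_pos (div_pos (by linarith) (by linarith))
  obtain ⟨ε', hε'def⟩ : ∃ e : ℝ, e = εbar + δ := ⟨_, rfl⟩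
  have hε'gt : εbar < ε' := by rw [hε'def]; linarith
  have hε'0 : 0 ≤ ε' := by linarith
  have hKε' : K*ε' < c := by
    have h1 : δ ≤ (c - K*εbar)/(2*(K+1)) := hδdef ▸ min_le_right _ _
    have h2 : K*δ ≤ K*((c - K*εbar)/(2*(K+1))) := mul_le_mul_of_nonneg_left h1 hK0
    have h3 : K*((c - K*εbar)/(2*(K+1))) ≤ (c - K*εbar)/2 := by
      rw [mul_div_assoc']
      rw [div_le_div_iff₀ (by linarith) (by norm_num)]
      nlinarith
    have h4 : K*ε' = K*εbar + K*δ := by rw [hε'def]; ring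
    linarith
  have hls : Filter.limsup (fun k : ℕ => supNorm (E k) / ((k:ℝ)+1)) atTop < ε' := by
    rw [← hεbar]; exact hε'gt
  obtain ⟨N₁, hN₁⟩ := Filter.eventually_atTop.mp (Filter.eventually_lt_of_limsup_lt hls hEbnd)
  have hEk : ∀ k, N₁ ≤ k → supNorm (E k) ≤ ((k:ℝ)+1) * ε' := by
    intro k hk
    have h := (hN₁ k hk).le
    rw [div_le_iff₀ (by positivity : (0:ℝ) < (k:ℝ)+1)] at h
    calc supNorm (E k) ≤ ε' * ((k:ℝ)+1) := h
      _ = ((k:ℝ)+1) * ε' := mul_comm _ _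
  obtain ⟨q, hq⟩ : ∃ q : ℝ, q = ε'/(1-γ) := ⟨_, rfl⟩
  have hq0 : 0 ≤ q := by rw [hq]; positivity
  have hqε : (1-γ)*q = ε' := by
    rw [hq]
    field_simp
  obtain ⟨M₀, hM₀def⟩ : ∃ M : ℝ, M = b N₁ + (D + ε')/(1-γ) := ⟨_, rfl⟩
  have hM₀0 : 0 ≤ M₀ := by
    rw [hM₀def]
    have h1 : 0 ≤ (D+ε')/(1-γ) := div_nonneg (by linarith) hg.le
    linarith [hb0 N₁]
  have hMeq : M₀ - γ*M₀ = (1-γ)*(b N₁) + D + ε' := by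
    rw [hM₀def]
    field_simp
    ring
  have hlin : ∀ k, N₁ ≤ k → b k ≤ M₀ + q*(k:ℝ) := by
    intro k hk
    induction k, hk using Nat.le_induction with
    | base =>
      have h0 : (0:ℝ) ≤ q*(N₁:ℝ) := mul_nonneg hq0 (by positivity)
      have h1 : 0 ≤ (D+ε')/(1-γ) := div_nonneg (by linarith) hg.le
      rw [hM₀def]
      linarith
    | succ k hk ih =>
      have h1 := hrec k
      have h2 := hEk k hk
      have h3 : γ * b k ≤ γ*(M₀ + q*(k:ℝ)) := mul_le_mul_of_nonneg_left ih hγ0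
      have h3' : γ*(M₀ + q*(k:ℝ)) = γ*M₀ + γ*(q*(k:ℝ)) := by ring
      have h4 : ε' * (k:ℝ) = q*(k:ℝ) - γ*(q*(k:ℝ)) := by rw [← hqε]; ring
      have h5 : ((k:ℝ)+1)*ε' = ε'*(k:ℝ) + ε' := by ring
      have h6 : 0 ≤ (1-γ)*(b N₁) := mul_nonneg hg.le (hb0 N₁)
      push_cast
      have h7 : q*((k:ℝ)+1) = q*(k:ℝ) + q := by ring
      linarith only [h1, h2, h3, h3', h4, h5, h6, h7, hMeq, hq0]
  obtain ⟨C₃, hC₃⟩ : ∃ C : ℝ, C = γ*(2*γ*M₀ + (2*supNorm (Ψ 0) + c0)) := ⟨_, rfl⟩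
  have hC₃0 : 0 ≤ C₃ := by
    rw [hC₃]
    have h1 := supNorm_nonneg (Ψ 0)
    have h2 : 0 ≤ 2*γ*M₀ := by positivity
    nlinarith
  have hckε : 0 < c - K*ε' := by linarith
  obtain ⟨N₂, hN₂⟩ := exists_nat_ge (C₃/((1-γ)*(c - K*ε')))
  rw [Filter.eventually_atTop]
  refine ⟨max (N₁+1) (N₂+1), fun k hk => ?_⟩
  obtain ⟨m, rfl⟩ : ∃ m, k = m+1 := ⟨k-1, by omega⟩
  have hm1 : N₁ ≤ m := by
    have := le_trans (le_max_left (N₁+1) (N₂+1)) hk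
    omega
  have hm2 : N₂ ≤ m+1 := by
    have := le_trans (le_max_right (N₁+1) (N₂+1)) hk
    omega
  have h1 := hperf m
  have h2 := hlin m hm1
  have h3 := hEk m hm1
  have hKid : 2*γ*ε' + 2*γ^2*q = (1-γ)*(K*ε') := by
    rw [hK, hq]
    field_simp
    ring
  have hC₃le : C₃ ≤ ((m:ℝ)+1)*((1-γ)*(c - K*ε')) := by
    have h5 : C₃/((1-γ)*(c - K*ε')) ≤ ((m:ℝ)+1) := by
      calc C₃/((1-γ)*(c - K*ε')) ≤ (N₂:ℝ) := hN₂
        _ ≤ (m:ℝ)+1 := by exact_mod_cast hm2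
    rw [div_le_iff₀ (mul_pos hg hckε)] at h5
    linarith
  have hA : γ*(2*γ*b m + (2*(supNorm (Ψ 0) + supNorm (E m)) + c0)) ≤
      C₃ + ((m:ℝ)+1)*((1-γ)*(K*ε')) := by
    rw [hC₃, ← hKid]
    have hm0 : (0:ℝ) ≤ (m:ℝ) := Nat.cast_nonneg m
    nlinarith [mul_le_mul_of_nonneg_left h2 (by positivity : (0:ℝ) ≤ 2*γ^2),
      mul_le_mul_of_nonneg_left h3 (by positivity : (0:ℝ) ≤ 2*γ),
      mul_nonneg (mul_nonneg (by norm_num : (0:ℝ) ≤ 2) (sq_nonneg γ)) hq0]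
  have hpos : 0 < (1-γ)*((m:ℝ)+1) := mul_pos hg (by positivity)
  have he : ((1-γ)*((m:ℝ)+1))*c =
      ((m:ℝ)+1)*((1-γ)*(K*ε')) + ((m:ℝ)+1)*((1-γ)*(c - K*ε')) := by ring
  have he2 : ((1-γ)*((m:ℝ)+1))*(supNorm (fun x a => Qstar x a - Qpi (m+1) x a)) =
      (1-γ)*(((m:ℝ)+1)*(supNorm (fun x a => Qstar x a - Qpi (m+1) x a))) := by ring
  have h7 : ((1-γ)*((m:ℝ)+1))*(supNorm (fun x a => Qstar x a - Qpi (m+1) x a)) ≤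
      ((1-γ)*((m:ℝ)+1))*c := by linarith
  have h8 := le_of_mul_le_mul_left h7 hpos
  push_cast at h8 ⊢
  exact h8
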